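/- For any compact set of matrices 𝓜 ⊂ ℝ^{n×n} and any k ∈ ℕ, k ≥ 1, the stabilizability radius satisfies ρ̃(𝓜^k) = ρ̃(𝓜)^k, where 𝓜^k denotes the set of all products of k matrices from 𝓜. -/

import Mathlib

open Real MeasureTheory

noncomputable def appE {n : ℕ} (A : Matrix (Fin n) (Fin n) ℝ) (x : EuclideanSpace ℝ (Fin n)) :
    EuclideanSpace ℝ (Fin n) :=
  Matrix.toEuclideanLin A x

def IsTraj {n : ℕ} (M : Set (Matrix (Fin n) (Fin n) ℝ)) (x : ℕ → EuclideanSpace ℝ (Fin n)) : Prop :=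
  ∀ k : ℕ, ∃ A ∈ M, x (k + 1) = appE A (x k)

noncomputable def stabRadius {n : ℕ} (M : Set (Matrix (Fin n) (Fin n) ℝ)) : ℝ :=
  sInf {l : ℝ | 0 ≤ l ∧ ∃ C > (0:ℝ), ∀ x0 : EuclideanSpace ℝ (Fin n),
    ∃ x : ℕ → EuclideanSpace ℝ (Fin n), x 0 = x0 ∧ IsTraj M x ∧
      ∀ k : ℕ, ‖x k‖ ≤ C * l ^ k * ‖x0‖}

noncomputable def stabRadiusAt {n : ℕ} (M : Set (Matrix (Fin n) (Fin n) ℝ))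
    (x0 : EuclideanSpace ℝ (Fin n)) : ℝ :=
  sInf {l : ℝ | 0 ≤ l ∧ ∃ x : ℕ → EuclideanSpace ℝ (Fin n), x 0 = x0 ∧ IsTraj M x ∧
    ∃ C > (0:ℝ), ∀ k : ℕ, ‖x k‖ ≤ C * l ^ k * ‖x0‖}

def prodSet {n : ℕ} (M : Set (Matrix (Fin n) (Fin n) ℝ)) (k : ℕ) :
    Set (Matrix (Fin n) (Fin n) ℝ) :=
  {A | ∃ l : List (Matrix (Fin n) (Fin n) ℝ), l.length = k ∧ (∀ B ∈ l, B ∈ M) ∧ l.prod = A}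

/-! ### Auxiliary lemmas -/

lemma appE_mul {n : ℕ} (A B : Matrix (Fin n) (Fin n) ℝ) (x : EuclideanSpace ℝ (Fin n)) :
    appE (A * B) x = appE A (appE B x) := by
  simp [appE, Matrix.toEuclideanLin_apply, Matrix.mulVec_mulVec]

lemma appE_one {n : ℕ} (x : EuclideanSpace ℝ (Fin n)) : appE 1 x = x := by
  simp [appE, Matrix.toEuclideanLin_apply]

def stabSet {n : ℕ} (M : Set (Matrix (Fin n) (Fin n) ℝ)) : Set ℝ :=
  {l : ℝ | 0 ≤ l ∧ ∃ C > (0:ℝ), ∀ x0 : EuclideanSpace ℝ (Fin n),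
    ∃ x : ℕ → EuclideanSpace ℝ (Fin n), x 0 = x0 ∧ IsTraj M x ∧
      ∀ k : ℕ, ‖x k‖ ≤ C * l ^ k * ‖x0‖}

lemma stabRadius_eq_sInf {n : ℕ} (M : Set (Matrix (Fin n) (Fin n) ℝ)) :
    stabRadius M = sInf (stabSet M) := rfl

lemma stabSet_bddBelow {n : ℕ} (M : Set (Matrix (Fin n) (Fin n) ℝ)) : BddBelow (stabSet M) :=
  ⟨0, fun _ hl => hl.1⟩

lemma exists_bound {n : ℕ} (M : Set (Matrix (Fin n) (Fin n) ℝ)) (hM : IsCompact M) :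
    ∃ K : ℝ, 1 ≤ K ∧ ∀ A ∈ M, ∀ x : EuclideanSpace ℝ (Fin n), ‖appE A x‖ ≤ K * ‖x‖ := by
  classical
  set f : Matrix (Fin n) (Fin n) ℝ →ₗ[ℝ]
      (EuclideanSpace ℝ (Fin n) →L[ℝ] EuclideanSpace ℝ (Fin n)) :=
    (LinearMap.toContinuousLinearMap.toLinearMap).comp
      (Matrix.toEuclideanLin : Matrix (Fin n) (Fin n) ℝ ≃ₗ[ℝ] _).toLinearMap with hf
  have hfc : Continuous f := f.continuous_of_finiteDimensional
  rcases M.eq_empty_or_nonempty with h | h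
  · exact ⟨1, le_refl 1, by simp [h]⟩
  · obtain ⟨A0, hA0, hmax⟩ := hM.exists_isMaxOn h (continuous_norm.comp hfc).continuousOn
    refine ⟨max ‖f A0‖ 1, le_max_right _ _, fun A hA x => ?_⟩
    have h1 : ‖appE A x‖ ≤ ‖f A‖ * ‖x‖ := (f A).le_opNorm x
    have h2 : ‖f A‖ ≤ max ‖f A0‖ 1 := le_trans (hmax hA) (le_max_left _ _)
    have : (0:ℝ) ≤ ‖x‖ := norm_nonneg x
    exact h1.trans (by gcongr)

lemma prod_bound {n : ℕ} {M : Set (Matrix (Fin n) (Fin n) ℝ)} {K : ℝ} (hK : 1 ≤ K)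
    (hKb : ∀ A ∈ M, ∀ x : EuclideanSpace ℝ (Fin n), ‖appE A x‖ ≤ K * ‖x‖) :
    ∀ (L : List (Matrix (Fin n) (Fin n) ℝ)), (∀ B ∈ L, B ∈ M) →
      ∀ x : EuclideanSpace ℝ (Fin n), ‖appE L.prod x‖ ≤ K ^ L.length * ‖x‖ := by
  intro L
  induction L with
  | nil => intro _ x; simp [appE_one]
  | cons a L ih =>
    intro hmem x
    have h1 : ‖appE a (appE L.prod x)‖ ≤ K * ‖appE L.prod x‖ :=
      hKb a (hmem a List.mem_cons_self) (appE L.prod x)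
    have h2 : ‖appE L.prod x‖ ≤ K ^ L.length * ‖x‖ :=
      ih (fun B hB => hmem B (List.mem_cons_of_mem a hB)) x
    have hK0 : (0:ℝ) ≤ K := le_trans zero_le_one hK
    calc ‖appE (a :: L).prod x‖ = ‖appE a (appE L.prod x)‖ := by
          rw [List.prod_cons, appE_mul]
      _ ≤ K * ‖appE L.prod x‖ := h1
      _ ≤ K * (K ^ L.length * ‖x‖) := by gcongr
      _ = K ^ (a :: L).length * ‖x‖ := by rw [List.length_cons, pow_succ]; ring

lemma traj_prod {n : ℕ} {M : Set (Matrix (Fin n) (Fin n) ℝ)}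
    {x : ℕ → EuclideanSpace ℝ (Fin n)} (hx : IsTraj M x) :
    ∀ (m j : ℕ), ∃ L : List (Matrix (Fin n) (Fin n) ℝ),
      L.length = m ∧ (∀ B ∈ L, B ∈ M) ∧ x (j + m) = appE L.prod (x j) := by
  intro m
  induction m with
  | zero => intro j; exact ⟨[], rfl, by simp, by simp [appE_one]⟩
  | succ m ih =>
    intro j
    obtain ⟨L, hlen, hmem, hval⟩ := ih j
    obtain ⟨A, hA, hstep⟩ := hx (j + m)
    refine ⟨A :: L, by simp [hlen], ?_, ?_⟩
    · intro B hB
      rcases List.mem_cons.mp hB with h | h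
      · rw [h]; exact hA
      · exact hmem B h
    · have : x (j + (m + 1)) = appE A (x (j + m)) := by rw [← add_assoc]; exact hstep
      rw [this, hval, List.prod_cons, appE_mul]

lemma stabSet_upward {n : ℕ} {M : Set (Matrix (Fin n) (Fin n) ℝ)} {l l' : ℝ}
    (hl : l ∈ stabSet M) (hle : l ≤ l') : l' ∈ stabSet M := by
  obtain ⟨hl0, C, hC, hT⟩ := hl
  refine ⟨le_trans hl0 hle, C, hC, fun x0 => ?_⟩
  obtain ⟨x, hx0, hxt, hxb⟩ := hT x0
  refine ⟨x, hx0, hxt, fun m => (hxb m).trans ?_⟩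
  have h1 : l ^ m ≤ l' ^ m := pow_le_pow_left₀ hl0 hle m
  have h0 : (0:ℝ) ≤ ‖x0‖ := norm_nonneg _
  exact mul_le_mul_of_nonneg_right (mul_le_mul_of_nonneg_left h1 (le_of_lt hC)) h0

lemma mem_pow {n : ℕ} {M : Set (Matrix (Fin n) (Fin n) ℝ)} {l : ℝ} (k : ℕ)
    (hl : l ∈ stabSet M) : l ^ k ∈ stabSet (prodSet M k) := by
  obtain ⟨hl0, C, hC, hT⟩ := hl
  refine ⟨pow_nonneg hl0 k, C, hC, fun x0 => ?_⟩
  obtain ⟨x, hx0, hxt, hxb⟩ := hT x0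
  refine ⟨fun j => x (j * k), by simpa using hx0, ?_, ?_⟩
  · intro j
    obtain ⟨L, hlen, hmem, hval⟩ := traj_prod hxt k (j * k)
    refine ⟨L.prod, ⟨L, hlen, hmem, rfl⟩, ?_⟩
    show x ((j + 1) * k) = appE L.prod (x (j * k))
    have : (j + 1) * k = j * k + k := by ring
    rw [this, hval]
  · intro j
    have := hxb (j * k)
    show ‖x (j * k)‖ ≤ C * (l ^ k) ^ j * ‖x0‖
    calc ‖x (j * k)‖ ≤ C * l ^ (j * k) * ‖x0‖ := this
      _ = C * (l ^ k) ^ j * ‖x0‖ := by rw [← pow_mul, mul_comm k j]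

lemma mem_root {n : ℕ} {M : Set (Matrix (Fin n) (Fin n) ℝ)} {K : ℝ} (hK : 1 ≤ K)
    (hKb : ∀ A ∈ M, ∀ x : EuclideanSpace ℝ (Fin n), ‖appE A x‖ ≤ K * ‖x‖)
    {k : ℕ} (hk : 1 ≤ k) {μ lam : ℝ} (hμ : μ ∈ stabSet (prodSet M k))
    (hlam : 0 < lam) (hle : μ ≤ lam ^ k) : lam ∈ stabSet M := by
  classical
  obtain ⟨hμ0, C, hC, hT⟩ := hμ
  have hK0 : (0:ℝ) ≤ K := le_trans zero_le_one hK
  set D : ℝ := max lam⁻¹ 1 with hD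
  have hD1 : (1:ℝ) ≤ D := le_max_right _ _
  have hD0 : (0:ℝ) ≤ D := le_trans zero_le_one hD1
  refine ⟨le_of_lt hlam, C * K ^ k * D ^ k, by positivity, fun x0 => ?_⟩
  obtain ⟨y, hy0, hyt, hyb⟩ := hT x0
  choose A hAmem hstep using hyt
  choose L hlen hmem hprod using hAmem
  set x : ℕ → EuclideanSpace ℝ (Fin n) :=
    fun m => appE ((L (m / k)).drop (k - m % k)).prod (y (m / k)) with hxdef
  have hkpos : 0 < k := hk
  have hdropk : ∀ j, (L j).drop k = [] := fun j =>
    List.drop_eq_nil_of_le (le_of_eq (hlen j))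
  -- key step identity
  have hxstep : ∀ m, ∃ A' ∈ M, x (m + 1) = appE A' (x m) := by
    intro m
    set j := m / k with hj
    set r := m % k with hr
    have hrk : r < k := Nat.mod_lt _ hkpos
    have hmeq : k * j + r = m := Nat.div_add_mod m k
    by_cases hcase : r + 1 < k
    · have hdiv : (m + 1) / k = j := by
        have : m + 1 = (r + 1) + j * k := by rw [mul_comm]; omega
        rw [this, Nat.add_mul_div_right _ _ hkpos, Nat.div_eq_of_lt hcase, Nat.zero_add]
      have hmod : (m + 1) % k = r + 1 := by
        have : m + 1 = (r + 1) + j * k := by rw [mul_comm]; omega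
        rw [this, Nat.add_mul_mod_self_right, Nat.mod_eq_of_lt hcase]
      have hidx : k - (r + 1) < (L j).length := by rw [hlen j]; omega
      refine ⟨(L j)[k - (r + 1)], hmem j _ (List.getElem_mem hidx), ?_⟩
      have hdropcons : (L j).drop (k - (r + 1)) =
          (L j)[k - (r + 1)] :: (L j).drop (k - r) := by
        have h2 : k - (r + 1) + 1 = k - r := by omega
        rw [List.drop_eq_getElem_cons hidx, h2]
      show appE ((L ((m+1) / k)).drop (k - (m+1) % k)).prod (y ((m+1) / k)) = _
      rw [hdiv, hmod, hdropcons, List.prod_cons, appE_mul]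
    · have hrk1 : r + 1 = k := by omega
      have hdiv : (m + 1) / k = j + 1 := by
        have : m + 1 = (j + 1) * k := by rw [add_mul, one_mul, mul_comm]; omega
        rw [this, Nat.mul_div_cancel _ hkpos]
      have hmod : (m + 1) % k = 0 := by
        have : m + 1 = (j + 1) * k := by rw [add_mul, one_mul, mul_comm]; omega
        rw [this, Nat.mul_mod_left]
      have hidx : 0 < (L j).length := by rw [hlen j]; omega
      refine ⟨(L j)[0], hmem j _ (List.getElem_mem hidx), ?_⟩
      have hLprod : (L j).prod = (L j)[0] * ((L j).drop 1).prod := by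
        conv_lhs => rw [← (List.drop_zero : List.drop 0 (L j) = L j), List.drop_eq_getElem_cons hidx]
        rw [List.prod_cons]
      have hxm : x m = appE ((L j).drop 1).prod (y j) := by
        have hkr : k - r = 1 := by omega
        show appE ((L (m / k)).drop (k - m % k)).prod (y (m / k)) = _
        rw [← hj, ← hr, hkr]
      show appE ((L ((m+1) / k)).drop (k - (m+1) % k)).prod (y ((m+1) / k)) = _
      rw [hdiv, hmod, Nat.sub_zero, hdropk, List.prod_nil, appE_one, hstep j, ← hprod j,
        hLprod, appE_mul, hxm]
  refine ⟨x, ?_, hxstep, ?_⟩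
  · show appE ((L (0 / k)).drop (k - 0 % k)).prod (y (0 / k)) = x0
    simp [hdropk, appE_one, hy0]
  · intro m
    set j := m / k with hj
    set r := m % k with hr
    have hrk : r < k := Nat.mod_lt _ hkpos
    have hmeq : k * j + r = m := Nat.div_add_mod m k
    have hlenD : ((L j).drop (k - r)).length = r := by
      rw [List.length_drop, hlen j]; omega
    have hb1 : ‖x m‖ ≤ K ^ r * ‖y j‖ := by
      have := prod_bound hK hKb ((L j).drop (k - r))
        (fun B hB => hmem j B (List.mem_of_mem_drop hB)) (y j)
      rwa [hlenD] at this
    have hb2 : ‖y j‖ ≤ C * μ ^ j * ‖x0‖ := hyb j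
    have hμlam : μ ^ j ≤ lam ^ (k * j) := by
      rw [pow_mul]
      exact pow_le_pow_left₀ hμ0 hle j
    have hlamm : lam ^ (k * j) ≤ D ^ k * lam ^ m := by
      have hsplit : lam ^ (k * j) * lam ^ r = lam ^ m := by
        rw [← pow_add]; congr 1
      have h1 : (1:ℝ) ≤ lam * D := by
        calc (1:ℝ) = lam * lam⁻¹ := (mul_inv_cancel₀ (ne_of_gt hlam)).symm
          _ ≤ lam * D := by gcongr; exact le_max_left _ _
      have h2 : lam ^ (k*j) = lam ^ m * (lam⁻¹) ^ r := by
        rw [← hsplit, mul_assoc, ← mul_pow, mul_inv_cancel₀ (ne_of_gt hlam), one_pow, mul_one]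
      rw [h2]
      have h3 : (lam⁻¹) ^ r ≤ D ^ r := pow_le_pow_left₀ (by positivity) (le_max_left _ _) r
      have h4 : D ^ r ≤ D ^ k := pow_le_pow_right₀ hD1 (le_of_lt hrk)
      have h5 : (0:ℝ) ≤ lam ^ m := by positivity
      calc lam ^ m * (lam⁻¹) ^ r ≤ lam ^ m * D ^ k := by
            exact mul_le_mul_of_nonneg_left (h3.trans h4) h5
        _ = D ^ k * lam ^ m := by ring
    have hKrk : K ^ r ≤ K ^ k := pow_le_pow_right₀ hK (le_of_lt hrk)
    have hn0 : (0:ℝ) ≤ ‖x0‖ := norm_nonneg _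
    have hyj0 : (0:ℝ) ≤ ‖y j‖ := norm_nonneg _
    calc ‖x m‖ ≤ K ^ r * ‖y j‖ := hb1
      _ ≤ K ^ k * ‖y j‖ := by gcongr
      _ ≤ K ^ k * (C * μ ^ j * ‖x0‖) := by gcongr
      _ ≤ K ^ k * (C * lam ^ (k * j) * ‖x0‖) := by gcongr
      _ ≤ K ^ k * (C * (D ^ k * lam ^ m) * ‖x0‖) := by gcongr
      _ = C * K ^ k * D ^ k * lam ^ m * ‖x0‖ := by ring

theorem stmt3 {n : ℕ} (M : Set (Matrix (Fin n) (Fin n) ℝ)) (hM : IsCompact M)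
    (k : ℕ) (hk : 1 ≤ k) :
    stabRadius (prodSet M k) = stabRadius M ^ k := by
  classical
  rcases M.eq_empty_or_nonempty with hMe | hMne
  · -- empty case
    subst hMe
    have h1 : stabSet (∅ : Set (Matrix (Fin n) (Fin n) ℝ)) = ∅ := by
      ext l
      simp only [Set.mem_empty_iff_false, iff_false]
      rintro ⟨-, C, -, hT⟩
      obtain ⟨x, -, hxt, -⟩ := hT 0
      obtain ⟨A, hA, -⟩ := hxt 0
      exact hA
    have h2 : prodSet (∅ : Set (Matrix (Fin n) (Fin n) ℝ)) k = ∅ := by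
      ext A
      simp only [Set.mem_empty_iff_false, iff_false]
      rintro ⟨L, hlen, hmem, -⟩
      have : L ≠ [] := by
        intro h; rw [h] at hlen; simp at hlen; omega
      obtain ⟨B, hB⟩ := List.exists_mem_of_ne_nil L this
      exact hmem B hB
    rw [stabRadius_eq_sInf, stabRadius_eq_sInf, h2, h1, Real.sInf_empty,
      zero_pow (by omega : k ≠ 0)]
  · obtain ⟨K, hK, hKb⟩ := exists_bound M hM
    have hK0 : (0:ℝ) ≤ K := le_trans zero_le_one hK
    obtain ⟨A0, hA0⟩ := hMne
    -- K ∈ stabSet M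
    have hKmem : K ∈ stabSet M := by
      refine ⟨hK0, 1, one_pos, fun x0 => ?_⟩
      refine ⟨fun m => appE ((List.replicate m A0).prod) x0, by simp [appE_one], ?_, ?_⟩
      · intro m
        refine ⟨A0, hA0, ?_⟩
        show appE (List.replicate (m + 1) A0).prod x0
            = appE A0 (appE (List.replicate m A0).prod x0)
        rw [List.replicate_succ, List.prod_cons, appE_mul]
      · intro m
        have h := prod_bound hK hKb (List.replicate m A0)
          (fun B hB => by rw [List.eq_of_mem_replicate hB]; exact hA0) x0
        rw [List.length_replicate] at h
        show ‖appE (List.replicate m A0).prod x0‖ ≤ 1 * K ^ m * ‖x0‖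
        rw [one_mul]
        exact h
    have hSMne : (stabSet M).Nonempty := ⟨K, hKmem⟩
    have hSPne : (stabSet (prodSet M k)).Nonempty := ⟨K ^ k, mem_pow k hKmem⟩
    set r := sInf (stabSet M) with hrdef
    set r' := sInf (stabSet (prodSet M k)) with hr'def
    have hr0 : 0 ≤ r := Real.sInf_nonneg (fun _ hl => hl.1)
    rw [stabRadius_eq_sInf, stabRadius_eq_sInf, ← hrdef, ← hr'def]
    have hle1 : r' ≤ r ^ k := by
      have key : ∀ ε > (0:ℝ), r' ≤ (r + ε) ^ k := by
        intro ε hε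
        obtain ⟨l, hl, hlt⟩ := exists_lt_of_csInf_lt hSMne (by linarith : r < r + ε)
        calc r' ≤ l ^ k := csInf_le (stabSet_bddBelow _) (mem_pow k hl)
          _ ≤ (r + ε) ^ k := pow_le_pow_left₀ hl.1 (le_of_lt hlt) k
      have cont : Filter.Tendsto (fun ε : ℝ => (r + ε) ^ k) (nhdsWithin 0 (Set.Ioi 0))
          (nhds (r ^ k)) := by
        have : Filter.Tendsto (fun ε : ℝ => (r + ε) ^ k) (nhds 0) (nhds ((r + 0) ^ k)) :=
          ((continuous_const.add continuous_id).pow k).tendsto 0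
        rw [add_zero] at this
        exact this.mono_left nhdsWithin_le_nhds
      exact ge_of_tendsto cont (eventually_nhdsWithin_of_forall (fun ε hε => key ε hε))
    have hle2 : r ^ k ≤ r' := by
      refine le_csInf hSPne (fun μ hμ => ?_)
      have hμ0 : 0 ≤ μ := hμ.1
      have hstep : ∀ lam : ℝ, 0 < lam → μ ≤ lam ^ k → r ≤ lam := fun lam h1 h2 =>
        csInf_le (stabSet_bddBelow _) (mem_root hK hKb hk hμ h1 h2)
      rcases eq_or_lt_of_le hμ0 with h | h
      · have hr_le : ∀ ε > (0:ℝ), r ≤ ε := by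
          intro ε hε
          exact hstep ε hε (by rw [← h]; positivity)
        have : r ≤ 0 := le_of_forall_pos_le_add (fun ε hε => by
          simpa using hr_le ε hε)
        have hreq : r = 0 := le_antisymm this hr0
        rw [hreq, zero_pow (by omega : k ≠ 0), ← h]
      · set lam := μ ^ ((k:ℝ)⁻¹) with hlamdef
        have hlampos : 0 < lam := Real.rpow_pos_of_pos h _
        have hlamk : lam ^ k = μ := by
          rw [hlamdef, ← Real.rpow_natCast (μ ^ ((k:ℝ)⁻¹)) k, ← Real.rpow_mul hμ0,
            inv_mul_cancel₀ (by exact_mod_cast (by omega : k ≠ 0)), Real.rpow_one]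
        have := hstep lam hlampos (le_of_eq hlamk.symm)
        calc r ^ k ≤ lam ^ k := pow_le_pow_left₀ hr0 this k
          _ = μ := hlamk
    linarith
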